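/- Let n ≥ 1, let q > 0 with q ≠ 1, and let Φ : Matrix (Fin n) ℂ →ₗ[ℂ] Matrix (Fin n) ℂ be a positive trace-preserving linear map. Then Φ is unital (Φ 1 = 1) if and only if Φ does not decrease the Tsallis entropy of parameter q, i.e. T_q(Φ ρ) ≥ T_q(ρ) for every density matrix ρ, where T_q(ρ) = ((∑_k λ_k(ρ)^q) − 1)/(1 − q) and λ_k(ρ) are the eigenvalues of ρ (real powers taken via rpow). -/

import Mathlib

open scoped Matrix ComplexOrder

/-- A density matrix: positive semidefinite with unit trace. -/
def IsDensityMatrix {n : ℕ} (ρ : Matrix (Fin n) (Fin n) ℂ) : Prop :=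
  ρ.PosSemidef ∧ ρ.trace = 1

/-- The (real) eigenvalues of a matrix, via its Hermitian spectral decomposition
(junk value `0` if the matrix is not Hermitian). -/
noncomputable def eigs {n : ℕ} (A : Matrix (Fin n) (Fin n) ℂ) : Fin n → ℝ :=
  if h : A.IsHermitian then h.eigenvalues else 0

/-- A linear map on matrices is positive if it preserves positive semidefiniteness. -/
def IsPositiveMap {n : ℕ}
    (Φ : Matrix (Fin n) (Fin n) ℂ →ₗ[ℂ] Matrix (Fin n) (Fin n) ℂ) : Prop :=
  ∀ A : Matrix (Fin n) (Fin n) ℂ, A.PosSemidef → (Φ A).PosSemidef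

/-- A linear map on matrices is trace-preserving if it preserves the trace. -/
def IsTracePreserving {n : ℕ}
    (Φ : Matrix (Fin n) (Fin n) ℂ →ₗ[ℂ] Matrix (Fin n) (Fin n) ℂ) : Prop :=
  ∀ A : Matrix (Fin n) (Fin n) ℂ, (Φ A).trace = A.trace


/-- The Tsallis entropy of parameter `q`: `T_q(ρ) = ((∑ λ_k^q) - 1) / (1 - q)`. -/
noncomputable def tsallisEntropy {n : ℕ} (q : ℝ) (A : Matrix (Fin n) (Fin n) ℂ) : ℝ :=
  ((∑ k, eigs A k ^ q) - 1) / (1 - q)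

section Aux

open Matrix

private lemma diag_sum_single' {n : ℕ} : ∑ j, (diagonal (Pi.single j 1 : Fin n → ℂ)) = 1 := by
  ext i k
  rcases eq_or_ne i k with rfl | h
  · simp [Matrix.sum_apply, Matrix.smul_apply, diagonal_apply, Pi.single_apply]
  · simp [Matrix.sum_apply, Matrix.smul_apply, diagonal_apply, Pi.single_apply, h]

private lemma diag_decomp' {n : ℕ} (lam : Fin n → ℝ) :
    diagonal ((Complex.ofReal : ℝ → ℂ) ∘ lam) = ∑ j, (lam j : ℂ) • diagonal (Pi.single j 1) := by
  ext i k
  rcases eq_or_ne i k with rfl | h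
  · simp [Matrix.sum_apply, Matrix.smul_apply, diagonal_apply, Pi.single_apply]
  · simp [Matrix.sum_apply, Matrix.smul_apply, diagonal_apply, Pi.single_apply, h]

private lemma diag_const_eq_smul_one {n : ℕ} (c : ℂ) :
    diagonal (fun _ : Fin n => c) = c • (1 : Matrix (Fin n) (Fin n) ℂ) := by
  ext i k
  rcases eq_or_ne i k with rfl | h
  · simp [diagonal_apply, Matrix.one_apply]
  · simp [diagonal_apply, Matrix.one_apply, h]

/-- The sum of the eigenvalues of a Hermitian matrix is the trace. -/
private lemma sum_eigs_eq_trace' {n : ℕ} {A : Matrix (Fin n) (Fin n) ℂ} (hA : A.IsHermitian) :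
    (↑(∑ k, hA.eigenvalues k) : ℂ) = A.trace := by
  conv_rhs => rw [hA.spectral_theorem, Unitary.conjStarAlgAut_apply]
  rw [Matrix.trace_mul_cycle]
  rw [Matrix.mem_unitaryGroup_iff'.mp hA.eigenvectorUnitary.2, one_mul, Matrix.trace_diagonal]
  push_cast
  rfl

/-- Spectral projections of a Hermitian matrix. -/
private noncomputable def projs' {n : ℕ} {A : Matrix (Fin n) (Fin n) ℂ} (hA : A.IsHermitian)
    (j : Fin n) : Matrix (Fin n) (Fin n) ℂ :=
  (hA.eigenvectorUnitary : Matrix (Fin n) (Fin n) ℂ) * diagonal (Pi.single j 1) *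
    star (hA.eigenvectorUnitary : Matrix (Fin n) (Fin n) ℂ)

private lemma projs_sum' {n : ℕ} {A : Matrix (Fin n) (Fin n) ℂ} (hA : A.IsHermitian) :
    ∑ j, projs' hA j = 1 := by
  have h2 : (hA.eigenvectorUnitary : Matrix (Fin n) (Fin n) ℂ) *
      (star (hA.eigenvectorUnitary : Matrix (Fin n) (Fin n) ℂ)) = 1 :=
    Matrix.mem_unitaryGroup_iff.mp hA.eigenvectorUnitary.2
  unfold projs'
  rw [← Finset.sum_mul, ← Finset.mul_sum, diag_sum_single', mul_one, h2]

private lemma herm_decomp' {n : ℕ} {A : Matrix (Fin n) (Fin n) ℂ} (hA : A.IsHermitian) :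
    A = ∑ j, (hA.eigenvalues j : ℂ) • projs' hA j := by
  conv_lhs => rw [hA.spectral_theorem, Unitary.conjStarAlgAut_apply]
  have : (RCLike.ofReal ∘ hA.eigenvalues : Fin n → ℂ) = (Complex.ofReal ∘ hA.eigenvalues) := rfl
  rw [this, diag_decomp']
  unfold projs'
  rw [Finset.mul_sum, Finset.sum_mul]
  congr 1; funext j
  rw [Matrix.mul_smul, Matrix.smul_mul]

/-- A doubly stochastic matrix relating the eigenvalues of `Φ ρ` to those of `ρ`,
for a positive trace-preserving unital map `Φ`. -/
private lemma exists_doublyStochastic' {n : ℕ}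
    (Φ : Matrix (Fin n) (Fin n) ℂ →ₗ[ℂ] Matrix (Fin n) (Fin n) ℂ)
    (hpos : IsPositiveMap Φ) (htp : IsTracePreserving Φ)
    (hu : Φ 1 = 1) {ρ : Matrix (Fin n) (Fin n) ℂ} (hρ : ρ.PosSemidef) :
    ∃ B : Fin n → Fin n → ℝ,
      (∀ i j, 0 ≤ B i j) ∧ (∀ i, ∑ j, B i j = 1) ∧ (∀ j, ∑ i, B i j = 1) ∧
      (∀ i, eigs (Φ ρ) i = ∑ j, B i j * eigs ρ j) := by
  have hH : ρ.IsHermitian := hρ.1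
  have hσp : (Φ ρ).PosSemidef := hpos ρ hρ
  have hσ : (Φ ρ).IsHermitian := hσp.1
  set V : Matrix (Fin n) (Fin n) ℂ := (hσ.eigenvectorUnitary : Matrix (Fin n) (Fin n) ℂ) with hV
  have hV1 : star V * V = 1 := Matrix.mem_unitaryGroup_iff'.mp hσ.eigenvectorUnitary.2
  have hV2 : V * star V = 1 := Matrix.mem_unitaryGroup_iff.mp hσ.eigenvectorUnitary.2
  set N : Fin n → Matrix (Fin n) (Fin n) ℂ := fun j => star V * Φ (projs' hH j) * V with hN
  have hNpsd : ∀ j, (N j).PosSemidef := by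
    intro j
    have hPj : (projs' hH j).PosSemidef := by
      have hd : (diagonal (Pi.single j 1 : Fin n → ℂ)).PosSemidef := by
        rw [Matrix.posSemidef_diagonal_iff]
        intro i
        rcases eq_or_ne j i with rfl | h
        · simp
        · simp [Pi.single_apply, h]
      simpa [projs', Matrix.star_eq_conjTranspose] using
        hd.mul_mul_conjTranspose_same (hH.eigenvectorUnitary : Matrix (Fin n) (Fin n) ℂ)
    simpa [hN, Matrix.star_eq_conjTranspose] using
      (hpos _ hPj).conjTranspose_mul_mul_same V
  refine ⟨fun i j => ((N j) i i).re, ?_, ?_, ?_, ?_⟩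
  · intro i j
    have h := (hNpsd j).dotProduct_mulVec_nonneg (Pi.single i 1)
    have he : star (Pi.single i 1) ⬝ᵥ (N j) *ᵥ Pi.single i 1 = (N j) i i := by
      simp [dotProduct, Matrix.mulVec, Pi.single_apply]
    rw [he] at h
    exact (RCLike.nonneg_iff.mp h).1
  · -- rows sum to 1 (unitality)
    intro i
    have hsum : ∑ j, N j = 1 := by
      have : ∑ j, Φ (projs' hH j) = 1 := by
        rw [← map_sum, projs_sum', hu]
      simp only [hN]
      rw [← Finset.sum_mul, ← Finset.mul_sum, this, mul_one, hV1]
    have := congrArg (fun M => (M i i).re) hsum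
    simpa [Matrix.sum_apply] using this
  · -- columns sum to 1 (trace preservation)
    intro j
    have htr : (N j).trace = 1 := by
      rw [hN]
      simp only
      rw [Matrix.trace_mul_cycle, hV2, one_mul, htp]
      rw [projs', Matrix.trace_mul_cycle]
      rw [Matrix.mem_unitaryGroup_iff'.mp hH.eigenvectorUnitary.2, one_mul,
        Matrix.trace_diagonal]
      simp
    have := congrArg Complex.re htr
    simpa [Matrix.trace, Matrix.diag, Complex.re_sum] using this
  · -- eigenvalue relation
    intro i
    have hdiag : star V * (Φ ρ) * V = diagonal (RCLike.ofReal ∘ hσ.eigenvalues) :=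
      by have := hσ.conjStarAlgAut_star_eigenvectorUnitary
         rwa [Unitary.conjStarAlgAut_apply, Unitary.coe_star, star_star] at this
    have hsum : star V * (Φ ρ) * V = ∑ j, (hH.eigenvalues j : ℂ) • N j := by
      conv_lhs => rw [show ρ = ∑ j, (hH.eigenvalues j : ℂ) • projs' hH j from herm_decomp' hH]
      rw [map_sum, Finset.mul_sum, Finset.sum_mul]
      refine Finset.sum_congr rfl fun j _ => ?_
      rw [_root_.map_smul, Matrix.mul_smul, Matrix.smul_mul]
    have := congrArg (fun M => (M i i).re) (hdiag.symm.trans hsum)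
    simp only [Matrix.sum_apply, Matrix.smul_apply, diagonal_apply_eq, Function.comp_apply,
      Complex.re_sum, smul_eq_mul, Complex.mul_re, Complex.ofReal_re, Complex.ofReal_im,
      RCLike.ofReal_re, zero_mul, sub_zero] at this
    rw [eigs, dif_pos hσ, eigs, dif_pos hH]
    simpa [mul_comm] using this

/-- Jensen step: doubly stochastic mixing does not decrease Tsallis entropy. -/
private lemma forward_ineq' {n : ℕ} {q : ℝ} (hq0 : 0 < q) (hq1 : q ≠ 1)
    (lam mu : Fin n → ℝ) (hlam : ∀ j, 0 ≤ lam j)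
    (B : Fin n → Fin n → ℝ) (hB : ∀ i j, 0 ≤ B i j)
    (hrow : ∀ i, ∑ j, B i j = 1) (hcol : ∀ j, ∑ i, B i j = 1)
    (hmu : ∀ i, mu i = ∑ j, B i j * lam j) :
    ((∑ k, lam k ^ q) - 1) / (1 - q) ≤ ((∑ k, mu k ^ q) - 1) / (1 - q) := by
  rcases lt_or_gt_of_ne hq1 with hq | hq
  · -- q < 1 : concave, need ∑ lam^q ≤ ∑ mu^q
    have key : ∀ i, ∑ j, B i j * lam j ^ q ≤ mu i ^ q := by
      intro i
      have := (Real.concaveOn_rpow hq0.le hq.le).le_map_sum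
        (t := Finset.univ) (w := B i) (p := lam)
        (fun j _ => hB i j) (hrow i) (fun j _ => hlam j)
      simpa [smul_eq_mul, hmu i] using this
    have h1 : ∑ k, lam k ^ q ≤ ∑ k, mu k ^ q := by
      calc ∑ k, lam k ^ q = ∑ j, (∑ i, B i j) * lam j ^ q := by
            simp [hcol]
        _ = ∑ i, ∑ j, B i j * lam j ^ q := by
            rw [Finset.sum_comm]; simp [Finset.sum_mul]
        _ ≤ ∑ i, mu i ^ q := Finset.sum_le_sum fun i _ => key i
    have h1q : (0:ℝ) < 1 - q := by linarith
    exact div_le_div_of_nonneg_right (by linarith) h1q.le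
  · -- q > 1 : convex, need ∑ mu^q ≤ ∑ lam^q
    have key : ∀ i, mu i ^ q ≤ ∑ j, B i j * lam j ^ q := by
      intro i
      have := (convexOn_rpow hq.le).map_sum_le
        (t := Finset.univ) (w := B i) (p := lam)
        (fun j _ => hB i j) (hrow i) (fun j _ => hlam j)
      simpa [smul_eq_mul, hmu i] using this
    have h1 : ∑ k, mu k ^ q ≤ ∑ k, lam k ^ q := by
      calc ∑ k, mu k ^ q ≤ ∑ i, ∑ j, B i j * lam j ^ q :=
            Finset.sum_le_sum fun i _ => key i
        _ = ∑ j, (∑ i, B i j) * lam j ^ q := by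
            rw [Finset.sum_comm]; simp [Finset.sum_mul]
        _ = ∑ k, lam k ^ q := by simp [hcol]
    have h1q : (1:ℝ) - q < 0 := by linarith
    exact (div_le_div_right_of_neg h1q).mpr (by linarith)

/-- Equality case: a probability vector whose Tsallis sum matches the uniform one is uniform. -/
private lemma backward_eq' {n : ℕ} (hn : 1 ≤ n) {q : ℝ} (hq0 : 0 < q) (hq1 : q ≠ 1)
    (mu : Fin n → ℝ) (hmu0 : ∀ j, 0 ≤ mu j) (hsum : ∑ j, mu j = 1)
    (hT : ((n : ℝ) * ((n:ℝ)⁻¹) ^ q - 1) / (1 - q) ≤ ((∑ k, mu k ^ q) - 1) / (1 - q)) :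
    ∀ j, mu j = (n:ℝ)⁻¹ := by
  have npos : (0:ℝ) < n := by exact_mod_cast hn
  have hw1 : ∑ _j : Fin n, (n:ℝ)⁻¹ = 1 := by
    simp [Finset.sum_const, Finset.card_univ]
    field_simp
  have hmem : ∀ j : Fin n, j ∈ Finset.univ → mu j ∈ Set.Ici (0:ℝ) := fun j _ => hmu0 j
  have key : ∀ j k : Fin n, mu j = mu k := by
    rcases lt_or_gt_of_ne hq1 with hq | hq
    · -- q < 1, strictly concave
      have hS : (n : ℝ) * ((n:ℝ)⁻¹) ^ q ≤ ∑ k, mu k ^ q := by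
        have h1q : (0:ℝ) < 1 - q := by linarith
        nlinarith [mul_le_mul_of_nonneg_right hT (le_of_lt h1q),
          div_mul_cancel₀ ((n : ℝ) * ((n:ℝ)⁻¹) ^ q - 1) (ne_of_gt h1q),
          div_mul_cancel₀ ((∑ k, mu k ^ q) - 1) (ne_of_gt h1q)]
      have h_eq : (fun x : ℝ => x ^ q) (∑ j, (n:ℝ)⁻¹ • mu j)
          ≤ ∑ j, (n:ℝ)⁻¹ • (fun x : ℝ => x ^ q) (mu j) := by
        simp only [smul_eq_mul, ← Finset.mul_sum, hsum, mul_one]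
        rw [← mul_le_mul_iff_right₀ npos, ← mul_assoc, mul_inv_cancel₀ (ne_of_gt npos), one_mul]
        exact hS
      have := (Real.strictConcaveOn_rpow hq0 hq).eq_of_map_sum_eq
        (t := Finset.univ) (w := fun _ => (n:ℝ)⁻¹) (p := mu)
        (fun j _ => by positivity) hw1 hmem h_eq
      exact fun j k => this (Finset.mem_univ j) (Finset.mem_univ k)
    · -- q > 1, strictly convex
      have hS : ∑ k, mu k ^ q ≤ (n : ℝ) * ((n:ℝ)⁻¹) ^ q := by
        have h1q : (1:ℝ) - q < 0 := by linarith
        have := (div_le_div_right_of_neg h1q).mp hT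
        linarith
      have h_eq : ∑ j, (n:ℝ)⁻¹ • (fun x : ℝ => x ^ q) (mu j)
          ≤ (fun x : ℝ => x ^ q) (∑ j, (n:ℝ)⁻¹ • mu j) := by
        simp only [smul_eq_mul, ← Finset.mul_sum, hsum, mul_one]
        rw [← mul_le_mul_iff_right₀ npos, ← mul_assoc, mul_inv_cancel₀ (ne_of_gt npos), one_mul]
        exact hS
      have := (strictConvexOn_rpow hq).eq_of_le_map_sum
        (t := Finset.univ) (w := fun _ => (n:ℝ)⁻¹) (p := mu)
        (fun j _ => by positivity) hw1 hmem h_eq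
      exact fun j k => this (Finset.mem_univ j) (Finset.mem_univ k)
  intro j
  have : (n : ℝ) * mu j = 1 := by
    calc (n : ℝ) * mu j = ∑ _k : Fin n, mu j := by
          simp [Finset.sum_const, Finset.card_univ, mul_comm]
      _ = ∑ k, mu k := Finset.sum_congr rfl fun k _ => key j k
      _ = 1 := hsum
  field_simp at this ⊢
  linarith

private lemma eigenvalues_smul_one' {n : ℕ} (c : ℝ)
    (h : (((c:ℝ) : ℂ) • (1 : Matrix (Fin n) (Fin n) ℂ)).IsHermitian) :
    ∀ k, h.eigenvalues k = c := by
  have h1 := h.conjStarAlgAut_star_eigenvectorUnitary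
  rw [Unitary.conjStarAlgAut_apply, Unitary.coe_star, star_star] at h1
  rw [Matrix.mul_smul, Matrix.smul_mul, mul_one,
    Matrix.mem_unitaryGroup_iff'.mp h.eigenvectorUnitary.2] at h1
  have h2 : Matrix.diagonal (fun _ : Fin n => ((c:ℝ) : ℂ))
      = Matrix.diagonal (RCLike.ofReal ∘ h.eigenvalues) := by
    rw [diag_const_eq_smul_one]; exact h1
  have h4 := Matrix.diagonal_injective h2
  intro k
  have := congrFun h4 k
  simp only [Function.comp_apply] at this
  exact (Complex.ofReal_injective this).symm

end Aux

/-- A positive trace-preserving linear map `Φ` is unital iff it does not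
decrease the Tsallis entropy of parameter `q` (`0 < q ≠ 1`) on density matrices. -/
theorem unital_iff_tsallisEntropy_nondecreasing {n : ℕ} (hn : 1 ≤ n)
    {q : ℝ} (hq0 : 0 < q) (hq1 : q ≠ 1)
    (Φ : Matrix (Fin n) (Fin n) ℂ →ₗ[ℂ] Matrix (Fin n) (Fin n) ℂ)
    (hpos : IsPositiveMap Φ) (htp : IsTracePreserving Φ) :
    Φ 1 = 1 ↔
      ∀ ρ : Matrix (Fin n) (Fin n) ℂ, IsDensityMatrix ρ →
        tsallisEntropy q ρ ≤ tsallisEntropy q (Φ ρ) := by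
  constructor
  · -- unital → entropy nondecreasing
    intro hu ρ hρ
    obtain ⟨B, hB, hrow, hcol, hmu⟩ := exists_doublyStochastic' Φ hpos htp hu hρ.1
    have hlam : ∀ j, 0 ≤ eigs ρ j := by
      intro j
      rw [eigs, dif_pos hρ.1.1]
      exact hρ.1.eigenvalues_nonneg j
    exact forward_ineq' hq0 hq1 _ _ hlam B hB hrow hcol hmu
  · -- entropy nondecreasing → unital
    intro h
    have hn0 : (n:ℂ) ≠ 0 := by
      exact_mod_cast Nat.cast_ne_zero.mpr (by omega)
    have hn0' : ((n:ℝ)) ≠ 0 := by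
      exact_mod_cast Nat.cast_ne_zero.mpr (by omega)
    set ρ0 : Matrix (Fin n) (Fin n) ℂ := ((((n:ℝ)⁻¹ : ℝ) : ℂ)) • 1 with hρ0
    have hcast : ((((n:ℝ)⁻¹ : ℝ)) : ℂ) * (n:ℂ) = 1 := by
      push_cast
      field_simp
    have hdiag0 : ρ0 = Matrix.diagonal (fun _ => (((n:ℝ)⁻¹ : ℝ) : ℂ)) := by
      rw [hρ0, diag_const_eq_smul_one]
    have hpsd0 : ρ0.PosSemidef := by
      rw [hdiag0]
      refine Matrix.PosSemidef.diagonal (Pi.le_def.mpr fun i => ?_)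
      simp only [Pi.zero_apply]
      exact_mod_cast (by positivity : (0:ℝ) ≤ (n:ℝ)⁻¹)
    have htr0 : ρ0.trace = 1 := by
      rw [hρ0, Matrix.trace_smul, Matrix.trace_one]
      simp only [Fintype.card_fin, smul_eq_mul]
      exact hcast
    have hH0 : ρ0.IsHermitian := hpsd0.1
    -- eigenvalues of ρ0 are all 1/n
    have heig0 : ∀ k, hH0.eigenvalues k = (n:ℝ)⁻¹ := eigenvalues_smul_one' ((n:ℝ)⁻¹) hH0
    -- the image σ := Φ ρ0
    have hσp : (Φ ρ0).PosSemidef := hpos ρ0 hpsd0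
    have hσ : (Φ ρ0).IsHermitian := hσp.1
    have hμ0 : ∀ j, 0 ≤ hσ.eigenvalues j := fun j => hσp.eigenvalues_nonneg j
    have hμsum : ∑ j, hσ.eigenvalues j = 1 := by
      have := sum_eigs_eq_trace' hσ
      rw [htp, htr0] at this
      exact_mod_cast this
    -- apply the entropy hypothesis to ρ0
    have hT := h ρ0 ⟨hpsd0, htr0⟩
    rw [tsallisEntropy, tsallisEntropy] at hT
    have hTρ0 : ∑ k, eigs ρ0 k ^ q = (n : ℝ) * ((n:ℝ)⁻¹) ^ q := by
      have : ∀ k, eigs ρ0 k = (n:ℝ)⁻¹ := by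
        intro k; rw [eigs, dif_pos hH0]; exact heig0 k
      simp [this, Finset.sum_const, Finset.card_univ, nsmul_eq_mul]
    have hTσ : ∀ k, eigs (Φ ρ0) k = hσ.eigenvalues k := by
      intro k; rw [eigs, dif_pos hσ]
    rw [hTρ0] at hT
    simp only [hTσ] at hT
    -- equality case forces uniform spectrum
    have huniform := backward_eq' hn hq0 hq1 _ hμ0 hμsum hT
    -- hence Φ ρ0 = ρ0
    have hσeq : Φ ρ0 = ρ0 := by
      have hspec := hσ.spectral_theorem
      have hfun : (RCLike.ofReal ∘ hσ.eigenvalues : Fin n → ℂ)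
          = fun _ => (((n:ℝ)⁻¹ : ℝ) : ℂ) := by
        funext k
        simp only [Function.comp_apply, huniform k]
        norm_cast
      rw [hspec, hfun, diag_const_eq_smul_one, Unitary.conjStarAlgAut_apply, Matrix.mul_smul, Matrix.smul_mul, mul_one,
        Matrix.mem_unitaryGroup_iff.mp hσ.eigenvectorUnitary.2, hρ0]
    -- conclude unitality
    have h1 : (1 : Matrix (Fin n) (Fin n) ℂ) = (n:ℂ) • ρ0 := by
      rw [hρ0, smul_smul, mul_comm, hcast, one_smul]
    calc Φ 1 = Φ ((n:ℂ) • ρ0) := by rw [← h1]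
      _ = (n:ℂ) • Φ ρ0 := by rw [map_smul]
      _ = (n:ℂ) • ρ0 := by rw [hσeq]
      _ = 1 := by rw [← h1]
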